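/- arXiv:1808.05799 — 2 statements merged into one kernel-verified Lean document; each statement's English description precedes it below -/
import Mathlib

section
/- Let G be a locally compact group with right Haar measure λ, Φ a Young function, a ∈ G, w a weight with w, w⁻¹ ∈ L^∞(G), K a compact set, E ⊆ K Borel, f bounded measurable supported in K, and n ∈ ℕ. Then N_Φ(T_{a,w}^n (f χ_E)) = N_Φ(φ_n · f · χ_E), where φ_n(x) = ∏_{j=1}^n w(x a^j). In particular N_Φ(T_{a,w}^n (f χ_E)) ≤ ‖f‖_∞ · ‖φ_n|_E‖_∞ / Φ⁻¹(1/λ(E)). -/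
open MeasureTheory Filter Set Topology

/-- A Young function: continuous, even, convex, vanishing at 0, positive on positives,
tending to infinity. -/
structure IsYoung (Φ : ℝ → ℝ) : Prop where
  continuous : Continuous Φ
  even : ∀ t, Φ (-t) = Φ t
  convex : ConvexOn ℝ Set.univ Φ
  zero : Φ 0 = 0
  pos : ∀ t : ℝ, 0 < t → 0 < Φ t
  tendsto_top : Tendsto Φ atTop atTop

/-- The complementary Young function Ψ(y) = sup { x|y| − Φ(x) : x ≥ 0 }. -/
noncomputable def complementaryYoung (Φ : ℝ → ℝ) (y : ℝ) : ℝ :=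
  sSup {z : ℝ | ∃ x : ℝ, 0 ≤ x ∧ z = x * |y| - Φ x}

/-- Generalized inverse of a Young function on [0, ∞). -/
noncomputable def youngInv (Φ : ℝ → ℝ) (t : ℝ) : ℝ :=
  sSup {s : ℝ | 0 ≤ s ∧ Φ s ≤ t}

/-- The Luxemburg norm N_Φ(f) = inf { k > 0 : ∫ Φ(|f|/k) dμ ≤ 1 }. -/
noncomputable def luxNorm {G : Type*} [MeasurableSpace G] (Φ : ℝ → ℝ) (μ : Measure G)
    (f : G → ℂ) : ℝ :=
  sInf {k : ℝ | 0 < k ∧ ∫⁻ x, ENNReal.ofReal (Φ (‖f x‖ / k)) ∂μ ≤ 1}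

/-- Membership in the Orlicz space L^Φ(G). -/
def MemOrlicz {G : Type*} [MeasurableSpace G] (Φ : ℝ → ℝ) (μ : Measure G)
    (f : G → ℂ) : Prop :=
  Measurable f ∧ ∃ α : ℝ, 0 < α ∧ ∫⁻ x, ENNReal.ofReal (Φ (α * ‖f x‖)) ∂μ < ⊤

/-- The weighted translation operator T_{a,w} f (x) = w(x) f(x a⁻¹). -/
noncomputable def wT {G : Type*} [Group G] (a : G) (w : G → ℝ) (f : G → ℂ) : G → ℂ :=
  fun x => (w x : ℂ) * f (x * a⁻¹)

/-- The operator S_{a,w} h (x) = h(xa) / w(xa). -/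
noncomputable def wS {G : Type*} [Group G] (a : G) (w : G → ℝ) (h : G → ℂ) : G → ℂ :=
  fun x => h (x * a) / (w (x * a) : ℂ)

/-- φ_n(x) = ∏_{j=1}^n w(x a^j). -/
noncomputable def phiW {G : Type*} [Group G] (a : G) (w : G → ℝ) (n : ℕ) (x : G) : ℝ :=
  ∏ j ∈ Finset.Icc 1 n, w (x * a ^ j)

/-- φ̃_n(x) = (∏_{j=0}^{n-1} w(x a^{-j}))⁻¹. -/
noncomputable def phiTW {G : Type*} [Group G] (a : G) (w : G → ℝ) (n : ℕ) (x : G) : ℝ :=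
  (∏ j ∈ Finset.range n, w (x * a ^ (-(j : ℤ))))⁻¹

/-- a is aperiodic: for every compact K there is M with K ∩ K a^{±n} = ∅ for all n > M. -/
def AperiodicElem {G : Type*} [Group G] [TopologicalSpace G] (a : G) : Prop :=
  ∀ K : Set G, IsCompact K → ∃ M : ℕ, ∀ n : ℕ, M < n →
    K ∩ ((fun x => x * a ^ n) '' K) = ∅ ∧ K ∩ ((fun x => x * (a ^ n)⁻¹) '' K) = ∅

/-- Δ₂-regularity of a Young function relative to the (non)compactness of G. -/
def Delta2Regular (G : Type*) [TopologicalSpace G] (Φ : ℝ → ℝ) : Prop :=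
  (CompactSpace G → ∃ M : ℝ, 0 < M ∧ ∃ t₀ : ℝ, 0 < t₀ ∧
      ∀ t : ℝ, t₀ ≤ t → Φ (2 * t) ≤ M * Φ t) ∧
  (¬ CompactSpace G → ∃ M : ℝ, 0 < M ∧ ∀ t : ℝ, 0 < t → Φ (2 * t) ≤ M * Φ t)

/-- Topological transitivity of T on L^Φ(G). -/
def OrliczTransitive {G : Type*} [MeasurableSpace G] (Φ : ℝ → ℝ) (μ : Measure G)
    (T : (G → ℂ) → (G → ℂ)) : Prop :=
  ∀ f g : G → ℂ, MemOrlicz Φ μ f → MemOrlicz Φ μ g → ∀ ε : ℝ, 0 < ε →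
    ∃ h : G → ℂ, MemOrlicz Φ μ h ∧ ∃ n : ℕ,
      luxNorm Φ μ (h - f) < ε ∧ luxNorm Φ μ (T^[n] h - g) < ε

/-- Topological mixing of T on L^Φ(G). -/
def OrliczMixing {G : Type*} [MeasurableSpace G] (Φ : ℝ → ℝ) (μ : Measure G)
    (T : (G → ℂ) → (G → ℂ)) : Prop :=
  ∀ f g : G → ℂ, MemOrlicz Φ μ f → MemOrlicz Φ μ g → ∀ ε : ℝ, 0 < ε →
    ∃ N : ℕ, ∀ n : ℕ, N ≤ n → ∃ h : G → ℂ, MemOrlicz Φ μ h ∧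
      luxNorm Φ μ (h - f) < ε ∧ luxNorm Φ μ (T^[n] h - g) < ε

/-- Recurrence of T on L^Φ(G). -/
def OrliczRecurrent {G : Type*} [MeasurableSpace G] (Φ : ℝ → ℝ) (μ : Measure G)
    (T : (G → ℂ) → (G → ℂ)) : Prop :=
  ∀ f : G → ℂ, MemOrlicz Φ μ f → ∀ ε : ℝ, 0 < ε →
    ∃ n : ℕ, 1 ≤ n ∧ ∃ h : G → ℂ, MemOrlicz Φ μ h ∧
      luxNorm Φ μ (h - f) < ε ∧ luxNorm Φ μ (T^[n] h - f) < ε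

/-- Topological multiple recurrence of T on L^Φ(G). -/
def OrliczMultiplyRecurrent {G : Type*} [MeasurableSpace G] (Φ : ℝ → ℝ) (μ : Measure G)
    (T : (G → ℂ) → (G → ℂ)) : Prop :=
  ∀ L : ℕ, 1 ≤ L → ∀ f : G → ℂ, MemOrlicz Φ μ f → ∀ ε : ℝ, 0 < ε →
    ∃ n : ℕ, 1 ≤ n ∧ ∃ h : G → ℂ, MemOrlicz Φ μ h ∧
      luxNorm Φ μ (h - f) < ε ∧
      ∀ l : ℕ, 1 ≤ l → l ≤ L → luxNorm Φ μ (T^[l * n] h - f) < ε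

/-- Density of the set of periodic points of T in L^Φ(G). -/
def OrliczDensePeriodic {G : Type*} [MeasurableSpace G] (Φ : ℝ → ℝ) (μ : Measure G)
    (T : (G → ℂ) → (G → ℂ)) : Prop :=
  ∀ f : G → ℂ, MemOrlicz Φ μ f → ∀ ε : ℝ, 0 < ε →
    ∃ g : G → ℂ, MemOrlicz Φ μ g ∧ (∃ n : ℕ, 1 ≤ n ∧ T^[n] g = g) ∧
      luxNorm Φ μ (g - f) < ε

/-- The weight condition for transitivity/recurrence. -/
def WeightCondition {G : Type*} [Group G] [TopologicalSpace G] [MeasurableSpace G]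
    (μ : Measure G) (a : G) (w : G → ℝ) : Prop :=
  ∀ K : Set G, IsCompact K → 0 < μ K →
    ∃ E : ℕ → Set G, ∃ n : ℕ → ℕ, StrictMono n ∧
      (∀ k, MeasurableSet (E k) ∧ E k ⊆ K) ∧
      Tendsto (fun k => μ (E k)) atTop (nhds (μ K)) ∧
      ∀ ε : ℝ, 0 < ε → ∃ N : ℕ, ∀ k, N ≤ k → ∀ x ∈ E k,
        phiW a w (n k) x < ε ∧ phiTW a w (n k) x < ε

/-- The weight condition for chaos (density of periodic points). -/
def ChaosWeightCondition {G : Type*} [Group G] [TopologicalSpace G] [MeasurableSpace G]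
    (μ : Measure G) (a : G) (w : G → ℝ) : Prop :=
  ∀ K : Set G, IsCompact K → 0 < μ K →
    ∃ E : ℕ → Set G, ∃ n : ℕ → ℕ, StrictMono n ∧
      (∀ k, MeasurableSet (E k) ∧ E k ⊆ K) ∧
      Tendsto (fun k => μ (E k)) atTop (nhds (μ K)) ∧
      ∀ ε : ℝ, 0 < ε → ∃ N : ℕ, ∀ k, N ≤ k → ∀ x ∈ E k,
        (∑' l : ℕ, phiW a w ((l + 1) * n k) x) +
          (∑' l : ℕ, phiTW a w ((l + 1) * n k) x) < ε

section AuxLemmas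

variable {Φ : ℝ → ℝ}

lemma IsYoung.nonneg' (hΦ : IsYoung Φ) {t : ℝ} (ht : 0 ≤ t) : 0 ≤ Φ t := by
  rcases ht.eq_or_lt with h | h
  · rw [← h, hΦ.zero]
  · exact (hΦ.pos t h).le

lemma IsYoung.mono' (hΦ : IsYoung Φ) {u v : ℝ} (hu : 0 ≤ u) (huv : u ≤ v) : Φ u ≤ Φ v := by
  rcases (hu.trans huv).eq_or_lt with h | hv
  · have hu0 : u = 0 := le_antisymm (h ▸ huv) hu
    rw [hu0, ← h]
  · have hdiv : u / v ≤ 1 := (div_le_one hv).mpr huv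
    have key : Φ ((u / v) • v + (1 - u / v) • (0 : ℝ)) ≤
        (u / v) • Φ v + (1 - u / v) • Φ 0 :=
      hΦ.convex.2 (Set.mem_univ v) (Set.mem_univ 0)
        (div_nonneg hu hv.le) (by linarith) (by ring)
    rw [smul_eq_mul, smul_eq_mul, mul_zero, add_zero, div_mul_cancel₀ u hv.ne',
      smul_eq_mul, smul_eq_mul, hΦ.zero, mul_zero, add_zero] at key
    exact key.trans (by nlinarith [hΦ.nonneg' hv.le])

lemma youngInv_bddAbove (hΦ : IsYoung Φ) (t : ℝ) :
    BddAbove {s : ℝ | 0 ≤ s ∧ Φ s ≤ t} := by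
  obtain ⟨B, hB⟩ := Filter.eventually_atTop.mp (hΦ.tendsto_top.eventually_gt_atTop t)
  refine ⟨B, fun s hs => ?_⟩
  by_contra hcon
  exact absurd hs.2 (not_le.mpr (hB s (le_of_not_ge hcon)))

lemma youngInv_spec (hΦ : IsYoung Φ) {t : ℝ} (ht : 0 ≤ t) :
    0 ≤ youngInv Φ t ∧ Φ (youngInv Φ t) ≤ t := by
  have hne : ({s : ℝ | 0 ≤ s ∧ Φ s ≤ t}).Nonempty :=
    ⟨0, le_refl 0, by rw [hΦ.zero]; exact ht⟩
  have hcl : IsClosed {s : ℝ | 0 ≤ s ∧ Φ s ≤ t} := by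
    have : {s : ℝ | 0 ≤ s ∧ Φ s ≤ t} = {s : ℝ | 0 ≤ s} ∩ {s : ℝ | Φ s ≤ t} := rfl
    rw [this]
    exact (isClosed_le continuous_const continuous_id).inter
      (isClosed_le hΦ.continuous continuous_const)
  have hmem := hcl.csSup_mem hne (youngInv_bddAbove hΦ t)
  exact ⟨hmem.1, hmem.2⟩

lemma youngInv_pos (hΦ : IsYoung Φ) {t : ℝ} (ht : 0 < t) : 0 < youngInv Φ t := by
  have h0 : Φ 0 < t := by rw [hΦ.zero]; exact ht
  have hev : ∀ᶠ s in nhds (0 : ℝ), Φ s < t :=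
    (hΦ.continuous.tendsto 0).eventually_lt_const h0
  obtain ⟨ε, hε, hball⟩ := Metric.eventually_nhds_iff.mp hev
  have hmem : ε / 2 ∈ {s : ℝ | 0 ≤ s ∧ Φ s ≤ t} := by
    refine ⟨by positivity, (hball ?_).le⟩
    simp only [Real.dist_eq, sub_zero]
    rw [abs_of_pos (by positivity)]
    linarith
  calc (0 : ℝ) < ε / 2 := by positivity
    _ ≤ youngInv Φ t := le_csSup (youngInv_bddAbove hΦ t) hmem

lemma phiW_eq_range {G : Type*} [Group G] (a : G) (w : G → ℝ) (n : ℕ) (x : G) :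
    phiW a w n x = ∏ j ∈ Finset.range n, w (x * a ^ (j + 1)) := by
  unfold phiW
  induction n with
  | zero => simp
  | succ n ih => rw [Finset.prod_Icc_succ_top (by omega), ih, Finset.prod_range_succ]

lemma phiW_pos {G : Type*} [Group G] (a : G) (w : G → ℝ) (hw : ∀ x, 0 < w x) (n : ℕ)
    (x : G) : 0 < phiW a w n x :=
  Finset.prod_pos fun _ _ => hw _

lemma wT_iterate {G : Type*} [Group G] (a : G) (w : G → ℝ) (g : G → ℂ) (n : ℕ) (x : G) :
    (wT a w)^[n] g x =
      ((∏ j ∈ Finset.range n, w (x * (a ^ j)⁻¹) : ℝ) : ℂ) * g (x * (a ^ n)⁻¹) := by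
  induction n generalizing x with
  | zero => simp
  | succ n ih =>
    rw [Function.iterate_succ_apply']
    show (w x : ℂ) * (wT a w)^[n] g (x * a⁻¹) = _
    rw [ih]
    have hx : ∀ j : ℕ, x * a⁻¹ * (a ^ j)⁻¹ = x * (a ^ (j + 1))⁻¹ := fun j => by
      rw [pow_succ, mul_inv_rev, ← mul_assoc]
    rw [Finset.prod_range_succ']
    push_cast
    simp_rw [hx]
    rw [pow_zero, inv_one, mul_one]
    ring

lemma luxNorm_le_of_bound {G : Type*} [MeasurableSpace G] (Φ : ℝ → ℝ) (hΦ : IsYoung Φ)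
    (μ : Measure G) (E : Set G) (hE : MeasurableSet E) (hfin : μ E ≠ ⊤)
    (h : G → ℂ) (M : ℝ) (hM : 0 ≤ M)
    (hbE : ∀ x ∈ E, ‖h x‖ ≤ M) (h0 : ∀ x ∉ E, h x = 0) :
    luxNorm Φ μ h ≤ M / youngInv Φ (1 / (μ E).toReal) := by
  have hrhs0 : 0 ≤ M / youngInv Φ (1 / (μ E).toReal) :=
    div_nonneg hM (youngInv_spec hΦ (by positivity)).1
  by_cases hdeg : μ E = 0 ∨ M = 0
  · have hzero : ∀ k : ℝ, ∫⁻ x, ENNReal.ofReal (Φ (‖h x‖ / k)) ∂μ = 0 := by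
      intro k
      rcases hdeg with hdeg | hdeg
      · have hpt : (fun x => ENNReal.ofReal (Φ (‖h x‖ / k))) =
            E.indicator fun x => ENNReal.ofReal (Φ (‖h x‖ / k)) := by
          funext x
          by_cases hx : x ∈ E
          · rw [Set.indicator_of_mem hx]
          · rw [Set.indicator_of_notMem hx, h0 x hx]
            simp [hΦ.zero]
        rw [hpt, lintegral_indicator hE, setLIntegral_measure_zero _ _ hdeg]
      · have hall : ∀ x, h x = 0 := fun x => by
          by_cases hx : x ∈ E
          · exact norm_le_zero_iff.mp (hdeg ▸ hbE x hx)
          · exact h0 x hx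
        simp [hall, hΦ.zero]
    have hset : {k : ℝ | 0 < k ∧ ∫⁻ x, ENNReal.ofReal (Φ (‖h x‖ / k)) ∂μ ≤ 1} =
        Set.Ioi 0 := by
      ext k
      rw [Set.mem_setOf_eq, Set.mem_Ioi, hzero k]
      simp
    unfold luxNorm
    rw [hset, csInf_Ioi]
    exact hrhs0
  · push_neg at hdeg
    obtain ⟨hE0, hM0⟩ := hdeg
    have hMpos : 0 < M := lt_of_le_of_ne hM (Ne.symm hM0)
    have htR : 0 < (μ E).toReal := ENNReal.toReal_pos hE0 hfin
    have htpos : 0 < 1 / (μ E).toReal := by positivity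
    have hspos : 0 < youngInv Φ (1 / (μ E).toReal) := youngInv_pos hΦ htpos
    set s := youngInv Φ (1 / (μ E).toReal) with hs
    have hsle : Φ s ≤ 1 / (μ E).toReal := (youngInv_spec hΦ htpos.le).2
    have hk : 0 < M / s := div_pos hMpos hspos
    have hmem : M / s ∈
        {k : ℝ | 0 < k ∧ ∫⁻ x, ENNReal.ofReal (Φ (‖h x‖ / k)) ∂μ ≤ 1} := by
      refine ⟨hk, ?_⟩
      have hle : ∀ x, ENNReal.ofReal (Φ (‖h x‖ / (M / s))) ≤
          E.indicator (fun _ => ENNReal.ofReal (Φ s)) x := by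
        intro x
        by_cases hx : x ∈ E
        · rw [Set.indicator_of_mem hx]
          apply ENNReal.ofReal_le_ofReal
          apply hΦ.mono' (by positivity)
          rw [div_le_iff₀ hk]
          calc ‖h x‖ ≤ M := hbE x hx
            _ = s * (M / s) := by field_simp
        · rw [Set.indicator_of_notMem hx, h0 x hx]
          simp [hΦ.zero]
      calc ∫⁻ x, ENNReal.ofReal (Φ (‖h x‖ / (M / s))) ∂μ
          ≤ ∫⁻ x, E.indicator (fun _ => ENNReal.ofReal (Φ s)) x ∂μ := lintegral_mono hle
        _ = ENNReal.ofReal (Φ s) * μ E := by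
            rw [lintegral_indicator hE, setLIntegral_const]
        _ ≤ ENNReal.ofReal (1 / (μ E).toReal) * μ E := by
            exact mul_le_mul_left (ENNReal.ofReal_le_ofReal hsle) _
        _ = 1 := by
            rw [one_div, ENNReal.ofReal_inv_of_pos htR, ENNReal.ofReal_toReal hfin,
              ENNReal.inv_mul_cancel hE0 hfin]
    have hbdd : BddBelow
        {k : ℝ | 0 < k ∧ ∫⁻ x, ENNReal.ofReal (Φ (‖h x‖ / k)) ∂μ ≤ 1} :=
      ⟨0, fun k hk => hk.1.le⟩
    exact csInf_le hbdd hmem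

end AuxLemmas

theorem luxNorm_wT_iterate {G : Type*} [Group G] [TopologicalSpace G] [IsTopologicalGroup G]
    [LocallyCompactSpace G] [MeasurableSpace G] [BorelSpace G]
    (μ : Measure G) [μ.IsMulRightInvariant] [IsFiniteMeasureOnCompacts μ]
    (Φ : ℝ → ℝ) (hΦ : IsYoung Φ) (a : G) (w : G → ℝ) (hw : Continuous w)
    (hwpos : ∀ x, 0 < w x) (hwb : ∃ C : ℝ, ∀ x, w x ≤ C)
    (hwib : ∃ c : ℝ, 0 < c ∧ ∀ x, c ≤ w x)
    (K : Set G) (hK : IsCompact K) (E : Set G) (hE : MeasurableSet E) (hEK : E ⊆ K)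
    (f : G → ℂ) (hf : Measurable f) (hsupp : ∀ x, x ∉ K → f x = 0)
    (C : ℝ) (hC : 0 ≤ C) (hfC : ∀ x, ‖f x‖ ≤ C)
    (n : ℕ) (D : ℝ) (hD : 0 ≤ D) (hφD : ∀ x ∈ E, phiW a w n x ≤ D) :
    luxNorm Φ μ ((wT a w)^[n] (fun x => f x * E.indicator (fun _ => (1 : ℂ)) x)) =
      luxNorm Φ μ (fun x => ((phiW a w n x : ℝ) : ℂ) * f x * E.indicator (fun _ => (1 : ℂ)) x) ∧
    luxNorm Φ μ ((wT a w)^[n] (fun x => f x * E.indicator (fun _ => (1 : ℂ)) x)) ≤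
      C * D / youngInv Φ (1 / (μ E).toReal) := by
  set g : G → ℂ := fun x => f x * E.indicator (fun _ => (1 : ℂ)) x with hg
  have key : ∀ x : G, phiW a w n (x * (a ^ n)⁻¹) =
      ∏ j ∈ Finset.range n, w (x * (a ^ j)⁻¹) := by
    intro x
    rw [phiW_eq_range]
    rw [← Finset.prod_range_reflect (fun j => w (x * (a ^ j)⁻¹)) n]
    apply Finset.prod_congr rfl
    intro j hj
    rw [Finset.mem_range] at hj
    congr 1
    rw [mul_assoc]
    congr 1
    rw [← zpow_natCast a (j + 1), ← zpow_natCast a n, ← zpow_natCast a (n - 1 - j),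
      ← zpow_neg, ← zpow_neg, ← zpow_add]
    congr 1
    omega
  have step1 : ∀ k : ℝ,
      ∫⁻ x, ENNReal.ofReal (Φ (‖(wT a w)^[n] g x‖ / k)) ∂μ =
        ∫⁻ x, ENNReal.ofReal
          (Φ (‖((phiW a w n x : ℝ) : ℂ) * f x * E.indicator (fun _ => (1 : ℂ)) x‖ / k)) ∂μ := by
    intro k
    have hpt : ∀ x : G, ENNReal.ofReal (Φ (‖(wT a w)^[n] g x‖ / k)) =
        (fun y => ENNReal.ofReal (Φ (‖((phiW a w n y : ℝ) : ℂ) * g y‖ / k)))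
          (x * (a ^ n)⁻¹) := by
      intro x
      simp only [wT_iterate, key]
    calc ∫⁻ x, ENNReal.ofReal (Φ (‖(wT a w)^[n] g x‖ / k)) ∂μ
        = ∫⁻ x, (fun y => ENNReal.ofReal (Φ (‖((phiW a w n y : ℝ) : ℂ) * g y‖ / k)))
            (x * (a ^ n)⁻¹) ∂μ := by
          exact lintegral_congr hpt
      _ = ∫⁻ y, ENNReal.ofReal (Φ (‖((phiW a w n y : ℝ) : ℂ) * g y‖ / k)) ∂μ :=
          lintegral_mul_right_eq_self (μ := μ)
            (fun y => ENNReal.ofReal (Φ (‖((phiW a w n y : ℝ) : ℂ) * g y‖ / k))) ((a ^ n)⁻¹)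
      _ = _ := by
          apply lintegral_congr
          intro y
          simp only [hg, mul_assoc]
  have heq : luxNorm Φ μ ((wT a w)^[n] g) =
      luxNorm Φ μ
        (fun x => ((phiW a w n x : ℝ) : ℂ) * f x * E.indicator (fun _ => (1 : ℂ)) x) := by
    unfold luxNorm
    congr 1
    ext k
    constructor
    · rintro ⟨hk, hint⟩
      exact ⟨hk, by rw [← step1 k]; exact hint⟩
    · rintro ⟨hk, hint⟩
      exact ⟨hk, by rw [step1 k]; exact hint⟩
  refine ⟨heq, ?_⟩
  rw [heq]
  have hfin : μ E ≠ ⊤ :=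
    ((measure_mono hEK).trans_lt hK.measure_lt_top).ne
  apply luxNorm_le_of_bound Φ hΦ μ E hE hfin _ (C * D) (mul_nonneg hC hD)
  · intro x hx
    rw [Set.indicator_of_mem hx, mul_one]
    calc ‖((phiW a w n x : ℝ) : ℂ) * f x‖ = ‖((phiW a w n x : ℝ) : ℂ)‖ * ‖f x‖ :=
          norm_mul _ _
      _ = phiW a w n x * ‖f x‖ := by
          rw [Complex.norm_real, Real.norm_eq_abs,
            abs_of_pos (phiW_pos a w hwpos n x)]
      _ ≤ D * C := mul_le_mul (hφD x hx) (hfC x) (norm_nonneg _) hD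
      _ = C * D := mul_comm D C
  · intro x hx
    rw [Set.indicator_of_notMem hx, mul_zero]
end

section
/- Let G be a locally compact second countable group, a ∈ G aperiodic, w a weight with w, w⁻¹ ∈ L^∞(G), and Φ a Δ₂-regular Young function. If the weighted translation T_{a,w} is chaotic on L^Φ(G), then it is topologically multiply recurrent. -/
open MeasureTheory Filter Set Topology

theorem multiplyRecurrent_of_chaotic {G : Type*} [Group G] [TopologicalSpace G] [IsTopologicalGroup G]
    [LocallyCompactSpace G] [SecondCountableTopology G] [MeasurableSpace G] [BorelSpace G]
    (μ : Measure G) [μ.IsMulRightInvariant] [IsFiniteMeasureOnCompacts μ] [μ.IsOpenPosMeasure]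
    (a : G) (ha : AperiodicElem a) (w : G → ℝ) (hw : Continuous w)
    (hwpos : ∀ x, 0 < w x) (hwb : ∃ C : ℝ, ∀ x, w x ≤ C)
    (hwib : ∃ c : ℝ, 0 < c ∧ ∀ x, c ≤ w x)
    (Φ : ℝ → ℝ) (hΦ : IsYoung Φ) (hΔ : Delta2Regular G Φ)
    (htrans : OrliczTransitive Φ μ (wT a w))
    (hper : OrliczDensePeriodic Φ μ (wT a w)) :
    OrliczMultiplyRecurrent Φ μ (wT a w) := by
  intro L _ f hf ε hε
  obtain ⟨g, hg, ⟨n, hn1, hgn⟩, hclose⟩ := hper f hf ε hε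
  refine ⟨n, hn1, g, hg, hclose, fun l _ _ => ?_⟩
  have : (wT a w)^[l * n] g = g := by
    rw [mul_comm, Function.iterate_mul]
    exact Function.iterate_fixed hgn l
  rw [this]
  exact hclose
end
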